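/- arXiv:2501.10745 — 5 statements merged into one kernel-verified Lean document; each statement's English description precedes it below -/
import Mathlib

section
/- Let M : ℝ → ℝ^{n×n}, λ : ℝ → ℝ and y : ℝ → ℝⁿ be differentiable at t₀, with M(t)y(t) = λ(t)y(t) for all t in a neighborhood of t₀ and y(t₀) ≠ 0. Let x ∈ ℝⁿ satisfy xᵀM(t₀) = λ(t₀)xᵀ and xᵀy(t₀) ≠ 0. Then λ'(t₀) = ( xᵀ M'(t₀) y(t₀) ) / ( xᵀ y(t₀) ). -/
open Matrix Filter

/-- Derivative of a simple eigenvalue: if `M(t) y(t) = λ(t) y(t)` near `t₀`, `y(t₀) ≠ 0`,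
`x` is a left eigenvector of `M(t₀)` for `λ(t₀)` with `xᵀ y(t₀) ≠ 0`, and `M`, `λ`, `y` are
differentiable at `t₀` (entrywise), then `λ'(t₀) = (xᵀ M'(t₀) y(t₀)) / (xᵀ y(t₀))`. -/
theorem deriv_simple_eigenvalue
    {n : ℕ} (M : ℝ → Matrix (Fin n) (Fin n) ℝ) (M' : Matrix (Fin n) (Fin n) ℝ)
    (lam : ℝ → ℝ) (lam' : ℝ) (y : ℝ → Fin n → ℝ) (y' : Fin n → ℝ) (t₀ : ℝ)
    (hM : ∀ i j, HasDerivAt (fun t => M t i j) (M' i j) t₀)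
    (hlam : HasDerivAt lam lam' t₀)
    (hy : ∀ i, HasDerivAt (fun t => y t i) (y' i) t₀)
    (heig : ∀ᶠ t in nhds t₀, M t *ᵥ y t = lam t • y t)
    (hy0 : y t₀ ≠ 0)
    (x : Fin n → ℝ)
    (hleft : x ᵥ* M t₀ = lam t₀ • x)
    (hxy : x ⬝ᵥ y t₀ ≠ 0) :
    lam' = (x ⬝ᵥ (M' *ᵥ y t₀)) / (x ⬝ᵥ y t₀) := by
  -- f t = x ⬝ (M t *ᵥ y t), as a double sum
  have hf : HasDerivAt (fun t => ∑ i, x i * ∑ j, M t i j * y t j)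
      (∑ i, x i * ∑ j, (M' i j * y t₀ j + M t₀ i j * y' j)) t₀ := by
    apply HasDerivAt.fun_sum
    intro i _
    exact ((HasDerivAt.fun_sum fun j _ => (hM i j).mul (hy j))).const_mul (x i)
  -- g t = lam t * (x ⬝ y t)
  have hg : HasDerivAt (fun t => lam t * ∑ i, x i * y t i)
      (lam' * ∑ i, x i * y t₀ i + lam t₀ * ∑ i, x i * y' i) t₀ := by
    exact hlam.mul (HasDerivAt.fun_sum fun i _ => (hy i).const_mul (x i))
  -- f = g eventually
  have hfg : (fun t => ∑ i, x i * ∑ j, M t i j * y t j)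
      =ᶠ[nhds t₀] (fun t => lam t * ∑ i, x i * y t i) := by
    filter_upwards [heig] with t ht
    have : ∀ i, (M t *ᵥ y t) i = lam t * y t i := fun i => by rw [ht]; rfl
    simp only [mulVec, dotProduct] at this
    calc ∑ i, x i * ∑ j, M t i j * y t j = ∑ i, x i * (lam t * y t i) := by
          refine Finset.sum_congr rfl fun i _ => by rw [this i]
      _ = lam t * ∑ i, x i * y t i := by rw [Finset.mul_sum]; exact Finset.sum_congr rfl fun i _ => by ring
  have heq := (hf.congr_of_eventuallyEq hfg.symm).unique hg
  -- rewrite sums as dot products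
  have hsplit : (∑ i, x i * ∑ j, (M' i j * y t₀ j + M t₀ i j * y' j))
      = x ⬝ᵥ (M' *ᵥ y t₀) + x ⬝ᵥ (M t₀ *ᵥ y') := by
    simp only [dotProduct, mulVec, Finset.sum_add_distrib, mul_add]
  have hmid : x ⬝ᵥ (M t₀ *ᵥ y') = lam t₀ * ∑ i, x i * y' i := by
    rw [dotProduct_mulVec, hleft]
    simp [dotProduct, Finset.mul_sum, mul_assoc]
  have hS : (∑ i, x i * y t₀ i) = x ⬝ᵥ y t₀ := rfl
  rw [hsplit, hmid, hS] at heq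
  field_simp
  linarith [heq]
end

section
/- Let M be a real n×n matrix, and let x, y ∈ ℝⁿ be vectors of unit Euclidean norm with xᵀy > 0, such that My = 0, xᵀM = 0, the kernel of M is the span of y, and the kernel of Mᵀ is the span of x. Let M# be a group inverse of M (i.e., MM# = M#M, M#MM# = M#, MM#M = M), and let M† be the Moore–Penrose pseudoinverse of M (i.e., MM†M = M, M†MM† = M†, (MM†)ᵀ = MM†, (M†M)ᵀ = M†M). With κ = 1/(xᵀy) and the projection Π = I − κ y xᵀ, one has M# = Π M† Π. -/
open Matrix

/-- Relation between the group inverse and the Moore–Penrose pseudoinverse: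
if `M y = 0`, `xᵀ M = 0`, `x, y` have unit Euclidean norm with `xᵀy > 0`,
`ker M = span y` and `ker Mᵀ = span x`, then with `κ = 1/(xᵀy)` and
`Π = I − κ y xᵀ` one has `M# = Π M† Π`. -/
theorem groupInverse_eq_proj_pinv_proj
    {n : ℕ} (M Mgi Mpi : Matrix (Fin n) (Fin n) ℝ) (x y : Fin n → ℝ)
    (hxnorm : Real.sqrt (∑ i, x i ^ 2) = 1)
    (hynorm : Real.sqrt (∑ i, y i ^ 2) = 1)
    (hxy : 0 < x ⬝ᵥ y)
    (hMy : M *ᵥ y = 0) (hxM : x ᵥ* M = 0)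
    (hkerM : {z : Fin n → ℝ | M *ᵥ z = 0} = {z | ∃ c : ℝ, z = c • y})
    (hkerMT : {z : Fin n → ℝ | Mᵀ *ᵥ z = 0} = {z | ∃ c : ℝ, z = c • x})
    (hgi1 : M * Mgi = Mgi * M) (hgi2 : Mgi * M * Mgi = Mgi) (hgi3 : M * Mgi * M = M)
    (hp1 : M * Mpi * M = M) (hp2 : Mpi * M * Mpi = Mpi)
    (hp3 : (M * Mpi)ᵀ = M * Mpi) (hp4 : (Mpi * M)ᵀ = Mpi * M) :
    Mgi = (1 - (1 / (x ⬝ᵥ y)) • vecMulVec y x) * Mpi * (1 - (1 / (x ⬝ᵥ y)) • vecMulVec y x) := by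
  have hxy0 : x ⬝ᵥ y ≠ 0 := ne_of_gt hxy
  set κ : ℝ := 1 / (x ⬝ᵥ y) with hκ
  set P : Matrix (Fin n) (Fin n) ℝ := 1 - κ • vecMulVec y x with hP
  -- y xᵀ M = 0
  have hyxM : vecMulVec y x * M = 0 := by
    ext i j
    have := congrFun hxM j
    simp only [vecMul, dotProduct, Pi.zero_apply] at this
    simp [mul_apply, vecMulVec_apply, mul_assoc, ← Finset.mul_sum, this]
  -- (y xᵀ) y = (x⬝y) y
  have hyxy : vecMulVec y x *ᵥ y = (x ⬝ᵥ y) • y := by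
    ext i
    simp only [mulVec, dotProduct, vecMulVec_apply, Pi.smul_apply, smul_eq_mul]
    rw [Finset.sum_mul]
    exact Finset.sum_congr rfl fun k _ => mul_rotate (y i) (x k) (y k) |>.symm ▸ by ring
  -- P y = 0
  have hPy : P *ᵥ y = 0 := by
    rw [hP, sub_mulVec, smul_mulVec, hyxy, one_mulVec, smul_smul, hκ,
      one_div, inv_mul_cancel₀ hxy0, one_smul, sub_self]
  -- (M Mgi) y = 0
  have hMMgiy : (M * Mgi) *ᵥ y = 0 := by
    rw [hgi1, ← mulVec_mulVec, hMy, mulVec_zero]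
  -- key: M * Mgi = P
  have key : M * Mgi = P := by
    set A : Matrix (Fin n) (Fin n) ℝ := M * Mgi - P with hA
    have hAM : A * M = 0 := by
      rw [hA, hP]
      simp [sub_mul, Matrix.smul_mul, hyxM, hgi3]
    have hAy : A *ᵥ y = 0 := by
      rw [hA, sub_mulVec, hPy, hMMgiy, sub_self]
    have hrows : ∀ i, A i = 0 := by
      intro i
      have hmem : A i ∈ {z : Fin n → ℝ | Mᵀ *ᵥ z = 0} := by
        show Mᵀ *ᵥ A i = 0
        rw [mulVec_transpose]
        ext j
        have := congrFun (congrFun hAM i) j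
        simpa [mul_apply, vecMul, dotProduct] using this
      rw [hkerMT] at hmem
      obtain ⟨c, hc⟩ := hmem
      have hcy : c * (x ⬝ᵥ y) = 0 := by
        have := congrFun hAy i
        simp only [mulVec, Pi.zero_apply] at this
        rw [hc] at this
        simpa [dotProduct, Finset.mul_sum, mul_assoc] using this
      have hc0 : c = 0 := by
        rcases mul_eq_zero.mp hcy with h | h
        · exact h
        · exact absurd h hxy0
      rw [hc, hc0, zero_smul]
    have : A = 0 := by
      ext i j; exact congrFun (hrows i) j
    have := sub_eq_zero.mp this
    exact this
  -- conclusion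
  calc Mgi = Mgi * M * Mgi := hgi2.symm
    _ = Mgi * (M * Mpi * M) * Mgi := by rw [hp1]
    _ = (Mgi * M) * Mpi * (M * Mgi) := by simp only [mul_assoc]
    _ = P * Mpi * P := by rw [← hgi1, key]
end

section
/- Let A ∈ ℝ^{n×n}, ε > 0, and let E : I → ℝ^{n×n} be differentiable on an open interval I. Let λ : I → ℝ and let v : I → ℝⁿ be differentiable with ‖v(t)‖₂ = 1 and (A + εE(t)) v(t) = λ(t) v(t) for all t ∈ I. Suppose for each t, A#(t) is a group inverse of A + εE(t) − λ(t)I and the eigenvector derivative formula v̇(t) = ε( −A#(t) Ė(t) v(t) + ( v(t)ᵀ A#(t) Ė(t) v(t) ) v(t) ) holds. Fix m distinct indices i₁, …, i_m in {1,…,n}; write ⟨v⟩_m = (1/m) Σ_{j=1}^m v_{i_j}, let u_i denote the i-th standard basis vector and ū = (1/m) Σ_{j=1}^m u_{i_j}, and define F(t) = (1/2) Σ_{k=1}^m ( v_{i_k}(t) − ⟨v(t)⟩_m )². Then F is differentiable with d/dt F(t) = ε ⟨R(t), Ė(t)⟩, where R = Σ_{k=1}^m ( v_{i_k} − ⟨v⟩_m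 ) [ ( v_{i_k} − ⟨v⟩_m ) (A#)ᵀ v vᵀ − (A#)ᵀ ( u_{i_k} − ū ) vᵀ ]. Moreover, if Ė(t) is supported on an edge set ℰ ⊆ {1,…,n}×{1,…,n} (i.e., Ė(t)_{ij} = 0 for all (i,j) ∉ ℰ), then d/dt F(t) = ε ⟨ P_ℰ(R(t)), Ė(t) ⟩, where P_ℰ is the orthogonal projection that sets to zero all entries of a matrix outside ℰ. -/
open Matrix

/-- Orthogonal projection onto matrices supported on an edge set `Ed`. -/
def projPattern {n : ℕ} (Ed : Set (Fin n × Fin n)) [DecidablePred (· ∈ Ed)]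
    (B : Matrix (Fin n) (Fin n) ℝ) : Matrix (Fin n) (Fin n) ℝ :=
  Matrix.of fun i j => if (i, j) ∈ Ed then B i j else 0

/-- The Frobenius inner product `⟨X, Y⟩ = trace(Xᵀ Y)`. -/
def frobInner {n : ℕ} (X Y : Matrix (Fin n) (Fin n) ℝ) : ℝ :=
  Matrix.trace (Xᵀ * Y)

lemma frobInner_eq_sum {n : ℕ} (X Y : Matrix (Fin n) (Fin n) ℝ) :
    frobInner X Y = ∑ i, ∑ j, X i j * Y i j := by
  simp only [frobInner, Matrix.trace, Matrix.diag, Matrix.mul_apply,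
    Matrix.transpose_apply]
  rw [Finset.sum_comm]

lemma frobInner_sum {n m : ℕ} (f : Fin m → Matrix (Fin n) (Fin n) ℝ)
    (Y : Matrix (Fin n) (Fin n) ℝ) :
    frobInner (∑ k, f k) Y = ∑ k, frobInner (f k) Y := by
  simp [frobInner, Matrix.transpose_sum, Matrix.sum_mul, Matrix.trace_sum]

lemma frobInner_smul {n : ℕ} (c : ℝ) (X Y : Matrix (Fin n) (Fin n) ℝ) :
    frobInner (c • X) Y = c * frobInner X Y := by
  simp [frobInner_eq_sum, Finset.mul_sum, mul_assoc]

lemma frobInner_sub {n : ℕ} (X X' Y : Matrix (Fin n) (Fin n) ℝ) :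
    frobInner (X - X') Y = frobInner X Y - frobInner X' Y := by
  simp [frobInner_eq_sum, sub_mul, Finset.sum_sub_distrib]

lemma frobInner_vecMulVec {n : ℕ} (a b : Fin n → ℝ) (M : Matrix (Fin n) (Fin n) ℝ) :
    frobInner (vecMulVec a b) M = a ⬝ᵥ (M *ᵥ b) := by
  simp only [frobInner_eq_sum, vecMulVec_apply, dotProduct, mulVec, Finset.mul_sum]
  refine Finset.sum_congr rfl fun i _ => ?_
  refine Finset.sum_congr rfl fun j _ => ?_
  ring

lemma sum_dotProduct' {n m : ℕ} (f : Fin m → Fin n → ℝ) (w : Fin n → ℝ) :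
    (∑ j, f j) ⬝ᵥ w = ∑ j, f j ⬝ᵥ w := by
  simp only [dotProduct, Finset.sum_apply, Finset.sum_mul]
  rw [Finset.sum_comm]

lemma frobInner_projPattern {n : ℕ} (Ed : Set (Fin n × Fin n)) [DecidablePred (· ∈ Ed)]
    (X Y : Matrix (Fin n) (Fin n) ℝ) (hY : ∀ i j, (i, j) ∉ Ed → Y i j = 0) :
    frobInner (projPattern Ed X) Y = frobInner X Y := by
  simp only [frobInner_eq_sum, projPattern, Matrix.of_apply]
  refine Finset.sum_congr rfl fun i _ => Finset.sum_congr rfl fun j _ => ?_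
  by_cases h : (i, j) ∈ Ed
  · simp [h]
  · simp [h, hY i j h]

/-- Structured gradient of the dispersion functional (directed graphs):
with `v(t)` the unit Perron eigenvector of `A + εE(t)`, `A#(t)` a group inverse of
`A + εE(t) − λ(t)I`, and the eigenvector-derivative formula holding,
the functional `F(t) = ½ Σ_k ( v_{i_k}(t) − ⟨v(t)⟩_m )²` satisfies
`Ḟ(t) = ε ⟨R(t), Ė(t)⟩`, and, if `Ė(t)` is supported on an edge set `ℰ`,
`Ḟ(t) = ε ⟨P_ℰ(R(t)), Ė(t)⟩`. -/
theorem deriv_dispersion_functional_directed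
    {n m : ℕ} (A : Matrix (Fin n) (Fin n) ℝ) (ε : ℝ) (hε : 0 < ε)
    (I : Set ℝ) (hI : IsOpen I)
    (E E' : ℝ → Matrix (Fin n) (Fin n) ℝ)
    (lam : ℝ → ℝ) (v v' : ℝ → Fin n → ℝ)
    (Agi : ℝ → Matrix (Fin n) (Fin n) ℝ)
    (hE : ∀ t ∈ I, ∀ i j, HasDerivAt (fun s => E s i j) (E' t i j) t)
    (hv : ∀ t ∈ I, ∀ i, HasDerivAt (fun s => v s i) (v' t i) t)
    (hnorm : ∀ t ∈ I, Real.sqrt (∑ i, v t i ^ 2) = 1)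
    (heig : ∀ t ∈ I, (A + ε • E t) *ᵥ v t = lam t • v t)
    (hgi : ∀ t ∈ I,
      (A + ε • E t - lam t • 1) * Agi t = Agi t * (A + ε • E t - lam t • 1) ∧
      Agi t * (A + ε • E t - lam t • 1) * Agi t = Agi t ∧
      (A + ε • E t - lam t • 1) * Agi t * (A + ε • E t - lam t • 1)
        = A + ε • E t - lam t • 1)
    (hvder : ∀ t ∈ I, v' t
      = ε • (-(Agi t *ᵥ (E' t *ᵥ v t)) + (v t ⬝ᵥ (Agi t *ᵥ (E' t *ᵥ v t))) • v t))
    (idx : Fin m → Fin n) (hidx : Function.Injective idx)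
    (F : ℝ → ℝ)
    (hF : F = fun t => (1 / 2) * ∑ k, (v t (idx k) - (1 / (m : ℝ)) * ∑ j, v t (idx j)) ^ 2)
    (R : ℝ → Matrix (Fin n) (Fin n) ℝ)
    (hR : ∀ t, R t = ∑ k, (v t (idx k) - (1 / (m : ℝ)) * ∑ j, v t (idx j)) •
      ((v t (idx k) - (1 / (m : ℝ)) * ∑ j, v t (idx j)) • vecMulVec ((Agi t)ᵀ *ᵥ v t) (v t)
        - vecMulVec
            ((Agi t)ᵀ *ᵥ ((Pi.single (idx k) 1 : Fin n → ℝ) - (1 / (m : ℝ)) • ∑ j, (Pi.single (idx j) 1 : Fin n → ℝ)))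
            (v t))) :
    (∀ t ∈ I, HasDerivAt F (ε * frobInner (R t) (E' t)) t) ∧
    (∀ (Ed : Set (Fin n × Fin n)) [DecidablePred (· ∈ Ed)], ∀ t ∈ I,
      (∀ i j, (i, j) ∉ Ed → E' t i j = 0) →
      HasDerivAt F (ε * frobInner (projPattern Ed (R t)) (E' t)) t) := by
  have key : ∀ t ∈ I, HasDerivAt F (ε * frobInner (R t) (E' t)) t := by
    intro t ht
    -- value of the Frobenius inner product
    have h1 : ((Agi t)ᵀ *ᵥ v t) ⬝ᵥ (E' t *ᵥ v t)
        = v t ⬝ᵥ (Agi t *ᵥ (E' t *ᵥ v t)) := by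
      rw [Matrix.mulVec_transpose, ← Matrix.dotProduct_mulVec]
    have h2 : ∀ k : Fin m, ((Agi t)ᵀ *ᵥ ((Pi.single (idx k) 1 : Fin n → ℝ)
          - (1 / (m : ℝ)) • ∑ j, (Pi.single (idx j) 1 : Fin n → ℝ))) ⬝ᵥ (E' t *ᵥ v t)
        = (Agi t *ᵥ (E' t *ᵥ v t)) (idx k)
          - (1 / (m : ℝ)) * ∑ j, (Agi t *ᵥ (E' t *ᵥ v t)) (idx j) := by
      intro k
      rw [Matrix.mulVec_transpose, ← Matrix.dotProduct_mulVec,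
        sub_dotProduct, smul_dotProduct, sum_dotProduct']
      simp [smul_eq_mul]
    have hfrob : frobInner (R t) (E' t)
        = ∑ k, (v t (idx k) - (1 / (m : ℝ)) * ∑ j, v t (idx j)) *
            ((v t (idx k) - (1 / (m : ℝ)) * ∑ j, v t (idx j)) *
                (v t ⬝ᵥ (Agi t *ᵥ (E' t *ᵥ v t)))
              - ((Agi t *ᵥ (E' t *ᵥ v t)) (idx k)
                  - (1 / (m : ℝ)) * ∑ j, (Agi t *ᵥ (E' t *ᵥ v t)) (idx j))) := by
      rw [hR, frobInner_sum]
      refine Finset.sum_congr rfl fun k _ => ?_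
      rw [frobInner_smul, frobInner_sub, frobInner_smul, frobInner_vecMulVec,
        frobInner_vecMulVec, h1, h2 k]
    -- the derivative of F
    have hmean : HasDerivAt (fun τ => ∑ j, v τ (idx j)) (∑ j, v' t (idx j)) t :=
      HasDerivAt.fun_sum (u := (Finset.univ : Finset (Fin m))) fun j _ => hv t ht (idx j)
    have hck : ∀ k : Fin m,
        HasDerivAt (fun τ => v τ (idx k) - (1 / (m : ℝ)) * ∑ j, v τ (idx j))
          (v' t (idx k) - (1 / (m : ℝ)) * ∑ j, v' t (idx j)) t :=
      fun k => (hv t ht (idx k)).sub (hmean.const_mul _)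
    have hFd := (HasDerivAt.fun_sum (u := (Finset.univ : Finset (Fin m)))
      (fun k _ => (hck k).pow 2)).const_mul ((1 : ℝ) / 2)
    have hFd' : HasDerivAt F
        ((1 / 2) * ∑ k, ((2 : ℕ) : ℝ) *
          (v t (idx k) - (1 / (m : ℝ)) * ∑ j, v t (idx j)) ^ (2 - 1) *
          (v' t (idx k) - (1 / (m : ℝ)) * ∑ j, v' t (idx j))) t := by
      rw [hF]; exact hFd
    have hv'app : ∀ i, v' t i
        = ε * (-((Agi t *ᵥ (E' t *ᵥ v t)) i)
            + (v t ⬝ᵥ (Agi t *ᵥ (E' t *ᵥ v t))) * v t i) := by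
      intro i
      rw [hvder t ht]
      simp [smul_eq_mul]
    have hsum : ∑ j, ε * (-((Agi t *ᵥ (E' t *ᵥ v t)) (idx j))
          + (v t ⬝ᵥ (Agi t *ᵥ (E' t *ᵥ v t))) * v t (idx j))
        = ε * (-(∑ j, (Agi t *ᵥ (E' t *ᵥ v t)) (idx j))
            + (v t ⬝ᵥ (Agi t *ᵥ (E' t *ᵥ v t))) * ∑ j, v t (idx j)) := by
      simp [Finset.mul_sum, Finset.sum_add_distrib, mul_add]
    have heq : (1 / 2) * ∑ k, ((2 : ℕ) : ℝ) *
          (v t (idx k) - (1 / (m : ℝ)) * ∑ j, v t (idx j)) ^ (2 - 1) *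
          (v' t (idx k) - (1 / (m : ℝ)) * ∑ j, v' t (idx j))
        = ε * frobInner (R t) (E' t) := by
      rw [hfrob]
      conv_lhs => rw [Finset.mul_sum]
      conv_rhs => rw [Finset.mul_sum]
      apply Finset.sum_congr rfl
      intro k _
      simp only [hv'app, hsum]
      push_cast
      ring
    rw [← heq]
    exact hFd'
  refine ⟨key, ?_⟩
  intro Ed _ t ht hsupp
  rw [frobInner_projPattern Ed (R t) (E' t) hsupp]
  exact key t ht
end

section
/- Let A ∈ ℝ^{n×n} be symmetric, ε > 0, and let E : I → ℝ^{n×n} be differentiable on an open interval I with E(t) symmetric for all t. Let λ : I → ℝ and let v : I → ℝⁿ be differentiable with ‖v(t)‖₂ = 1 and (A + εE(t)) v(t) = λ(t) v(t) for all t ∈ I. Let A†(t) be the Moore–Penrose pseudoinverse of A + εE(t) − λ(t)I (satisfying the four Penrose equations), and suppose the eigenvector derivative formula v̇(t) = −ε A†(t) Ė(t) v(t) holds. Fix m distinct indices i₁, …, i_m; write ⟨v⟩_m = (1/m) Σ_{j=1}^m v_{i_j}, let u_i denote the i-th standard basis vector and ū = (1/m) Σ_{j=1}^m u_{i_j}, and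 define F(t) = (1/2) Σ_{k=1}^m ( v_{i_k}(t) − ⟨v(t)⟩_m )². Let ℰ be a symmetric edge set and suppose Ė(t) is supported on ℰ. Then d/dt F(t) = ε ⟨ G(t), Ė(t) ⟩, where G = −P_ℰ( Σ_{k=1}^m ( v_{i_k} − ⟨v⟩_m ) · sym( A† ( u_{i_k} − ū ) vᵀ ) ) and sym(B) = (B + Bᵀ)/2. -/
open Matrix

/-- Symmetric part `sym(B) = (B + Bᵀ)/2`. -/
noncomputable def symPart {n : ℕ} (B : Matrix (Fin n) (Fin n) ℝ) : Matrix (Fin n) (Fin n) ℝ :=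
  (1 / 2 : ℝ) • (B + Bᵀ)

lemma pinv_unique {n : ℕ} {N B C : Matrix (Fin n) (Fin n) ℝ}
    (h1 : N * B * N = N) (h2 : B * N * B = B)
    (h3 : (N * B)ᵀ = N * B) (h4 : (B * N)ᵀ = B * N)
    (g1 : N * C * N = N) (g2 : C * N * C = C)
    (g3 : (N * C)ᵀ = N * C) (g4 : (C * N)ᵀ = C * N) : B = C := by
  have hNB : N * B = N * C := by
    calc N * B = (N * C * N) * B := by rw [g1]
    _ = (N * C) * (N * B) := by rw [Matrix.mul_assoc]
    _ = (N * C)ᵀ * (N * B)ᵀ := by rw [g3, h3]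
    _ = Cᵀ * (N * B * N)ᵀ := by simp [Matrix.transpose_mul, Matrix.mul_assoc]
    _ = Cᵀ * Nᵀ := by rw [h1]
    _ = (N * C)ᵀ := (Matrix.transpose_mul N C).symm
    _ = N * C := g3
  have hBN : B * N = C * N := by
    calc B * N = B * (N * C * N) := by rw [g1]
    _ = (B * N) * (C * N) := by simp [Matrix.mul_assoc]
    _ = (B * N)ᵀ * (C * N)ᵀ := by rw [h4, g4]
    _ = (N * B * N)ᵀ * Cᵀ := by simp [Matrix.transpose_mul, Matrix.mul_assoc]
    _ = Nᵀ * Cᵀ := by rw [h1]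
    _ = (C * N)ᵀ := (Matrix.transpose_mul C N).symm
    _ = C * N := g4
  calc B = B * N * B := h2.symm
  _ = B * (N * C) := by rw [Matrix.mul_assoc, hNB]
  _ = C * N * C := by rw [← Matrix.mul_assoc, hBN]
  _ = C := g2

lemma pinv_symm {n : ℕ} {N B : Matrix (Fin n) (Fin n) ℝ} (hN : Nᵀ = N)
    (h1 : N * B * N = N) (h2 : B * N * B = B)
    (h3 : (N * B)ᵀ = N * B) (h4 : (B * N)ᵀ = B * N) : Bᵀ = B := by
  have e1 : N * Bᵀ * N = N := by
    have := congrArg Matrix.transpose h1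
    simpa [Matrix.transpose_mul, hN, Matrix.mul_assoc] using this
  have e2 : Bᵀ * N * Bᵀ = Bᵀ := by
    have := congrArg Matrix.transpose h2
    simpa [Matrix.transpose_mul, hN, Matrix.mul_assoc] using this
  have key : N * Bᵀ = B * N := by
    calc N * Bᵀ = Nᵀ * Bᵀ := by rw [hN]
    _ = (B * N)ᵀ := (Matrix.transpose_mul B N).symm
    _ = B * N := h4
  have key2 : Bᵀ * N = N * B := by
    calc Bᵀ * N = Bᵀ * Nᵀ := by rw [hN]
    _ = (N * B)ᵀ := (Matrix.transpose_mul N B).symm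
    _ = N * B := h3
  have e3 : (N * Bᵀ)ᵀ = N * Bᵀ := by rw [key, h4]
  have e4 : (Bᵀ * N)ᵀ = Bᵀ * N := by rw [key2, h3]
  exact pinv_unique e1 e2 e3 e4 h1 h2 h3 h4

lemma sum_single_dotProduct {n m : ℕ} (a : Fin m → Fin n) (z : Fin n → ℝ) :
    (∑ j, (Pi.single (a j) 1 : Fin n → ℝ)) ⬝ᵥ z = ∑ j, z (a j) := by
  simp only [dotProduct, Finset.sum_apply, Finset.sum_mul]
  rw [Finset.sum_comm]
  simp [Pi.single_apply]

lemma single_sum {n : ℕ} (a : Fin n) (f : Fin n → ℝ) :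
    ∑ l, (Pi.single a 1 : Fin n → ℝ) l * f l = f a := by
  simp [Pi.single_apply]

/-- Fully constrained gradient of the dispersion functional (undirected graphs):
with `v(t)` the unit eigenvector of the symmetric matrix `A + εE(t)`, `A†(t)` the
Moore–Penrose pseudoinverse of `A + εE(t) − λ(t)I`, the eigenvector-derivative formula
`v̇ = −ε A† Ė v`, and `Ė(t)` supported on a symmetric edge set `ℰ`,
the functional `F(t) = ½ Σ_k ( v_{i_k}(t) − ⟨v(t)⟩_m )²` satisfies
`Ḟ(t) = ε ⟨G(t), Ė(t)⟩` with
`G = −P_ℰ( Σ_k ( v_{i_k} − ⟨v⟩_m ) sym( A† (u_{i_k} − ū) vᵀ ) )`. -/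
theorem deriv_dispersion_functional_undirected
    {n m : ℕ} (A : Matrix (Fin n) (Fin n) ℝ) (hA : A.IsSymm) (ε : ℝ) (hε : 0 < ε)
    (I : Set ℝ) (hI : IsOpen I)
    (E E' : ℝ → Matrix (Fin n) (Fin n) ℝ) (hEsymm : ∀ t ∈ I, (E t).IsSymm)
    (lam : ℝ → ℝ) (v v' : ℝ → Fin n → ℝ)
    (Api : ℝ → Matrix (Fin n) (Fin n) ℝ)
    (hE : ∀ t ∈ I, ∀ i j, HasDerivAt (fun s => E s i j) (E' t i j) t)
    (hv : ∀ t ∈ I, ∀ i, HasDerivAt (fun s => v s i) (v' t i) t)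
    (hnorm : ∀ t ∈ I, Real.sqrt (∑ i, v t i ^ 2) = 1)
    (heig : ∀ t ∈ I, (A + ε • E t) *ᵥ v t = lam t • v t)
    (hpi : ∀ t ∈ I,
      (A + ε • E t - lam t • 1) * Api t * (A + ε • E t - lam t • 1)
        = A + ε • E t - lam t • 1 ∧
      Api t * (A + ε • E t - lam t • 1) * Api t = Api t ∧
      ((A + ε • E t - lam t • 1) * Api t)ᵀ = (A + ε • E t - lam t • 1) * Api t ∧
      (Api t * (A + ε • E t - lam t • 1))ᵀ = Api t * (A + ε • E t - lam t • 1))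
    (hvder : ∀ t ∈ I, v' t = -(ε • (Api t *ᵥ (E' t *ᵥ v t))))
    (idx : Fin m → Fin n) (hidx : Function.Injective idx)
    (F : ℝ → ℝ)
    (hF : F = fun t => (1 / 2) * ∑ k, (v t (idx k) - (1 / (m : ℝ)) * ∑ j, v t (idx j)) ^ 2)
    (Ed : Set (Fin n × Fin n)) [DecidablePred (· ∈ Ed)]
    (hEdsymm : ∀ i j, (i, j) ∈ Ed → (j, i) ∈ Ed)
    (hsupp : ∀ t ∈ I, ∀ i j, (i, j) ∉ Ed → E' t i j = 0)
    (G : ℝ → Matrix (Fin n) (Fin n) ℝ)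
    (hG : ∀ t, G t = -projPattern Ed (∑ k, (v t (idx k) - (1 / (m : ℝ)) * ∑ j, v t (idx j)) •
      symPart (vecMulVec
        (Api t *ᵥ ((Pi.single (idx k) 1 : Fin n → ℝ)
          - (1 / (m : ℝ)) • ∑ j, (Pi.single (idx j) 1 : Fin n → ℝ)))
        (v t)))) :
    ∀ t ∈ I, HasDerivAt F (ε * frobInner (G t) (E' t)) t := by
  intro t ht
  obtain ⟨h1, h2, h3, h4⟩ := hpi t ht
  have hA' : Aᵀ = A := hA
  have hEt : (E t)ᵀ = E t := hEsymm t ht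
  have hNsymm : (A + ε • E t - lam t • (1 : Matrix (Fin n) (Fin n) ℝ))ᵀ
      = A + ε • E t - lam t • 1 := by
    simp [Matrix.transpose_sub, Matrix.transpose_add, Matrix.transpose_smul, hA', hEt]
  have hApiT : (Api t)ᵀ = Api t := pinv_symm hNsymm h1 h2 h3 h4
  have hApi : ∀ i l, Api t i l = Api t l i := by
    intro i l
    conv_lhs => rw [← hApiT]
    rfl
  have hE'symm : ∀ i j, E' t i j = E' t j i := by
    intro i j
    have hji := hE t ht j i
    have heq : (fun s => E s i j) =ᶠ[nhds t] (fun s => E s j i) := by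
      filter_upwards [hI.mem_nhds ht] with s hs
      have hs' : (E s)ᵀ = E s := hEsymm s hs
      calc E s i j = (E s)ᵀ j i := rfl
      _ = E s j i := by rw [hs']
    exact (hE t ht i j).unique (hji.congr_of_eventuallyEq heq)
  -- abbreviations (as plain functions)
  have hsum : HasDerivAt (fun s => ∑ j, v s (idx j)) (∑ j, v' t (idx j)) t :=
    HasDerivAt.fun_sum (fun j _ => hv t ht (idx j))
  have hg : ∀ k : Fin m, HasDerivAt
      (fun s => v s (idx k) - (1 / (m : ℝ)) * ∑ j, v s (idx j))
      (v' t (idx k) - (1 / (m : ℝ)) * ∑ j, v' t (idx j)) t :=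
    fun k => (hv t ht (idx k)).sub (hsum.const_mul _)
  have hDer : HasDerivAt F ((1 / 2 : ℝ) * ∑ k, (((2 : ℕ) : ℝ)
      * (v t (idx k) - (1 / (m : ℝ)) * ∑ j, v t (idx j)) ^ (2 - 1)
      * (v' t (idx k) - (1 / (m : ℝ)) * ∑ j, v' t (idx j)))) t := by
    rw [hF]
    exact (HasDerivAt.fun_sum (fun k (_ : k ∈ Finset.univ) => (hg k).pow 2)).const_mul _
  -- the eigenvector derivative, rewritten through the symmetric pseudoinverse
  have stepA : ∀ k : Fin m,
      v' t (idx k) - (1 / (m : ℝ)) * ∑ j, v' t (idx j)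
      = -ε * ∑ i, (Api t *ᵥ ((Pi.single (idx k) 1 : Fin n → ℝ)
          - (1 / (m : ℝ)) • ∑ j, (Pi.single (idx j) 1 : Fin n → ℝ))) i
          * (E' t *ᵥ v t) i := by
    intro k
    have hv'e : v' t = -(ε • (Api t *ᵥ (E' t *ᵥ v t))) := hvder t ht
    have hdot : (∑ i, (Api t *ᵥ ((Pi.single (idx k) 1 : Fin n → ℝ)
          - (1 / (m : ℝ)) • ∑ j, (Pi.single (idx j) 1 : Fin n → ℝ))) i
          * (E' t *ᵥ v t) i)
        = (Api t *ᵥ (E' t *ᵥ v t)) (idx k)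
          - (1 / (m : ℝ)) * ∑ j, (Api t *ᵥ (E' t *ᵥ v t)) (idx j) := by
      calc (∑ i, (Api t *ᵥ ((Pi.single (idx k) 1 : Fin n → ℝ)
            - (1 / (m : ℝ)) • ∑ j, (Pi.single (idx j) 1 : Fin n → ℝ))) i
            * (E' t *ᵥ v t) i)
          = (Api t *ᵥ ((Pi.single (idx k) 1 : Fin n → ℝ)
            - (1 / (m : ℝ)) • ∑ j, (Pi.single (idx j) 1 : Fin n → ℝ)))
            ⬝ᵥ (E' t *ᵥ v t) := rfl
        _ = (E' t *ᵥ v t) ⬝ᵥ (Api t *ᵥ ((Pi.single (idx k) 1 : Fin n → ℝ)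
            - (1 / (m : ℝ)) • ∑ j, (Pi.single (idx j) 1 : Fin n → ℝ))) :=
            dotProduct_comm _ _
        _ = ((E' t *ᵥ v t) ᵥ* Api t) ⬝ᵥ ((Pi.single (idx k) 1 : Fin n → ℝ)
            - (1 / (m : ℝ)) • ∑ j, (Pi.single (idx j) 1 : Fin n → ℝ)) :=
            Matrix.dotProduct_mulVec _ _ _
        _ = ((Api t)ᵀ *ᵥ (E' t *ᵥ v t)) ⬝ᵥ ((Pi.single (idx k) 1 : Fin n → ℝ)
            - (1 / (m : ℝ)) • ∑ j, (Pi.single (idx j) 1 : Fin n → ℝ)) := by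
            rw [Matrix.mulVec_transpose]
        _ = ((Pi.single (idx k) 1 : Fin n → ℝ)
            - (1 / (m : ℝ)) • ∑ j, (Pi.single (idx j) 1 : Fin n → ℝ))
            ⬝ᵥ (Api t *ᵥ (E' t *ᵥ v t)) := by
            rw [hApiT]; exact dotProduct_comm _ _
        _ = (Api t *ᵥ (E' t *ᵥ v t)) (idx k)
            - (1 / (m : ℝ)) * ∑ j, (Api t *ᵥ (E' t *ᵥ v t)) (idx j) := by
            rw [sub_dotProduct, smul_dotProduct, sum_single_dotProduct,
              single_dotProduct, smul_eq_mul, one_mul]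
    rw [hdot, hv'e]
    simp only [Pi.neg_apply, Pi.smul_apply, smul_eq_mul, Finset.sum_neg_distrib]
    rw [← Finset.mul_sum]
    ring
  -- the gradient pairing
  have hdrop : ∀ B : Matrix (Fin n) (Fin n) ℝ,
      ∑ i, ∑ j, (-projPattern Ed B) i j * E' t i j
      = -∑ i, ∑ j, B i j * E' t i j := by
    intro B
    simp only [Matrix.neg_apply, neg_mul, Finset.sum_neg_distrib]
    congr 1
    refine Finset.sum_congr rfl fun i _ => Finset.sum_congr rfl fun j _ => ?_
    by_cases h : (i, j) ∈ Ed
    · simp [projPattern, h]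
    · simp [projPattern, h, hsupp t ht i j h]
  have stepB : frobInner (G t) (E' t)
      = -∑ k, (v t (idx k) - (1 / (m : ℝ)) * ∑ j, v t (idx j))
          * ∑ i, (Api t *ᵥ ((Pi.single (idx k) 1 : Fin n → ℝ)
            - (1 / (m : ℝ)) • ∑ j, (Pi.single (idx j) 1 : Fin n → ℝ))) i
            * (E' t *ᵥ v t) i := by
    rw [hG t, frobInner_eq_sum, hdrop]
    congr 1
    calc ∑ i, ∑ j, (∑ k, (v t (idx k) - (1 / (m : ℝ)) * ∑ j', v t (idx j')) •
          symPart (vecMulVec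
            (Api t *ᵥ ((Pi.single (idx k) 1 : Fin n → ℝ)
              - (1 / (m : ℝ)) • ∑ j', (Pi.single (idx j') 1 : Fin n → ℝ)))
            (v t))) i j * E' t i j
        = ∑ i, ∑ j, ∑ k, ((v t (idx k) - (1 / (m : ℝ)) * ∑ j', v t (idx j')) * (1 / 2))
            * (((Api t *ᵥ ((Pi.single (idx k) 1 : Fin n → ℝ)
                - (1 / (m : ℝ)) • ∑ j', (Pi.single (idx j') 1 : Fin n → ℝ))) i * v t j
              + (Api t *ᵥ ((Pi.single (idx k) 1 : Fin n → ℝ)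
                - (1 / (m : ℝ)) • ∑ j', (Pi.single (idx j') 1 : Fin n → ℝ))) j * v t i)
              * E' t i j) := by
          refine Finset.sum_congr rfl fun i _ => Finset.sum_congr rfl fun j _ => ?_
          rw [Matrix.sum_apply, Finset.sum_mul]
          refine Finset.sum_congr rfl fun k _ => ?_
          simp [symPart, Matrix.vecMulVec_apply, Matrix.smul_apply, Matrix.add_apply,
            Matrix.transpose_apply, smul_eq_mul]
          ring
      _ = ∑ k, ∑ i, ∑ j, ((v t (idx k) - (1 / (m : ℝ)) * ∑ j', v t (idx j')) * (1 / 2))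
            * (((Api t *ᵥ ((Pi.single (idx k) 1 : Fin n → ℝ)
                - (1 / (m : ℝ)) • ∑ j', (Pi.single (idx j') 1 : Fin n → ℝ))) i * v t j
              + (Api t *ᵥ ((Pi.single (idx k) 1 : Fin n → ℝ)
                - (1 / (m : ℝ)) • ∑ j', (Pi.single (idx j') 1 : Fin n → ℝ))) j * v t i)
              * E' t i j) := by
          exact (Finset.sum_congr rfl fun i _ => Finset.sum_comm).trans Finset.sum_comm
      _ = ∑ k, (v t (idx k) - (1 / (m : ℝ)) * ∑ j, v t (idx j))
            * ∑ i, (Api t *ᵥ ((Pi.single (idx k) 1 : Fin n → ℝ)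
              - (1 / (m : ℝ)) • ∑ j, (Pi.single (idx j) 1 : Fin n → ℝ))) i
              * (E' t *ᵥ v t) i := by
          refine Finset.sum_congr rfl fun k _ => ?_
          set w := Api t *ᵥ ((Pi.single (idx k) 1 : Fin n → ℝ)
            - (1 / (m : ℝ)) • ∑ j', (Pi.single (idx j') 1 : Fin n → ℝ)) with hw
          set c := v t (idx k) - (1 / (m : ℝ)) * ∑ j', v t (idx j') with hc
          have hT : ∑ i, ∑ j, w j * v t i * E' t i j
              = ∑ i, ∑ j, w i * v t j * E' t i j := by
            rw [Finset.sum_comm]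
            refine Finset.sum_congr rfl fun x _ => Finset.sum_congr rfl fun y _ => ?_
            rw [hE'symm y x]
          calc ∑ i, ∑ j, (c * (1 / 2)) * ((w i * v t j + w j * v t i) * E' t i j)
              = ∑ i, ∑ j, ((c * (1 / 2)) * (w i * v t j * E' t i j)
                + (c * (1 / 2)) * (w j * v t i * E' t i j)) := by
                refine Finset.sum_congr rfl fun i _ => Finset.sum_congr rfl fun j _ => ?_
                ring
            _ = (c * (1 / 2)) * (∑ i, ∑ j, w i * v t j * E' t i j)
                + (c * (1 / 2)) * (∑ i, ∑ j, w j * v t i * E' t i j) := by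
                simp [Finset.sum_add_distrib, Finset.mul_sum]
            _ = c * (∑ i, ∑ j, w i * v t j * E' t i j) := by
                rw [hT]; ring
            _ = c * ∑ i, w i * (E' t *ᵥ v t) i := by
                congr 1
                refine Finset.sum_congr rfl fun i _ => ?_
                rw [Matrix.mulVec, dotProduct, Finset.mul_sum]
                refine Finset.sum_congr rfl fun j _ => ?_
                ring
  -- put everything together
  have key : (1 / 2 : ℝ) * ∑ k, (((2 : ℕ) : ℝ)
      * (v t (idx k) - (1 / (m : ℝ)) * ∑ j, v t (idx j)) ^ (2 - 1)
      * (v' t (idx k) - (1 / (m : ℝ)) * ∑ j, v' t (idx j)))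
      = ε * frobInner (G t) (E' t) := by
    rw [stepB, ← Finset.sum_neg_distrib, Finset.mul_sum _ _ ((1:ℝ)/2),
      Finset.mul_sum _ _ ε]
    refine Finset.sum_congr rfl fun k _ => ?_
    rw [stepA k]
    push_cast
    ring
  exact key ▸ hDer
end

section
/- Let M be a symmetric real n×n matrix and let v ∈ ℝⁿ be a nonzero vector such that the kernel of M equals the span of v. Then the (n+1)×(n+1) block matrix [[M, v], [vᵀ, 0]] is invertible. More generally, for symmetric M with Mv = 0 and v ≠ 0, the block matrix [[M, v], [vᵀ, 0]] is invertible if and only if the orthogonal complement of v intersects the kernel of M trivially. -/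
open Matrix

/-- The bordered matrix `[[M, v], [vᵀ, 0]]`. -/
def borderedMatrix {n : ℕ} (M : Matrix (Fin n) (Fin n) ℝ) (v : Fin n → ℝ) :
    Matrix (Fin n ⊕ Unit) (Fin n ⊕ Unit) ℝ :=
  Matrix.fromBlocks M (Matrix.of fun i _ => v i) (Matrix.of fun _ j => v j) 0

lemma borderedMatrix_mulVec_inl {n : ℕ} (M : Matrix (Fin n) (Fin n) ℝ) (v : Fin n → ℝ)
    (w : Fin n ⊕ Unit → ℝ) (i : Fin n) :
    (borderedMatrix M v *ᵥ w) (Sum.inl i) = (M *ᵥ (w ∘ Sum.inl)) i + v i * w (Sum.inr ()) := by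
  simp [borderedMatrix, Matrix.mulVec, dotProduct, Fintype.sum_sum_type]

lemma borderedMatrix_mulVec_inr {n : ℕ} (M : Matrix (Fin n) (Fin n) ℝ) (v : Fin n → ℝ)
    (w : Fin n ⊕ Unit → ℝ) :
    (borderedMatrix M v *ᵥ w) (Sum.inr ()) = v ⬝ᵥ (w ∘ Sum.inl) := by
  simp [borderedMatrix, Matrix.mulVec, dotProduct, Fintype.sum_sum_type]

lemma borderedMatrix_key {n : ℕ} (M : Matrix (Fin n) (Fin n) ℝ) (hM : M.IsSymm)
    (v : Fin n → ℝ) (hv : v ≠ 0) (hMv : M *ᵥ v = 0)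
    (hC : ∀ z : Fin n → ℝ, v ⬝ᵥ z = 0 → M *ᵥ z = 0 → z = 0) :
    IsUnit (borderedMatrix M v) := by
  rw [Matrix.isUnit_iff_isUnit_det, isUnit_iff_ne_zero]
  intro hdet
  obtain ⟨w, hw, hBw⟩ := (Matrix.exists_mulVec_eq_zero_iff).2 hdet
  set z : Fin n → ℝ := w ∘ Sum.inl with hz
  set t : ℝ := w (Sum.inr ()) with ht
  have h1 : M *ᵥ z + t • v = 0 := by
    funext i
    have := congrFun hBw (Sum.inl i)
    rw [borderedMatrix_mulVec_inl] at this
    simpa [mul_comm] using this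
  have h2 : v ⬝ᵥ z = 0 := by
    have := congrFun hBw (Sum.inr ())
    rwa [borderedMatrix_mulVec_inr] at this
  have hvMz : v ⬝ᵥ (M *ᵥ z) = 0 := by
    rw [Matrix.dotProduct_mulVec, ← Matrix.mulVec_transpose, hM.eq, hMv]
    simp
  have hsum : v ⬝ᵥ (M *ᵥ z) + t * (v ⬝ᵥ v) = 0 := by
    have := congrArg (fun x => v ⬝ᵥ x) h1
    simpa [dotProduct_add, dotProduct_smul, smul_eq_mul] using this
  have hvv : v ⬝ᵥ v ≠ 0 := fun h => hv (dotProduct_self_eq_zero.mp h)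
  have ht0 : t = 0 := by
    have : t * (v ⬝ᵥ v) = 0 := by linarith [hsum, hvMz]
    exact (mul_eq_zero.mp this).resolve_right hvv
  have hz0 : z = 0 := by
    apply hC z h2
    have := h1
    rw [ht0, zero_smul, add_zero] at this
    exact this
  apply hw
  funext k
  cases k with
  | inl i => exact congrFun hz0 i
  | inr u => cases u; exact ht0

/-- Invertibility of the bordered matrix `[[M, v], [vᵀ, 0]]` for symmetric `M` and `v ≠ 0`:
if `ker M = span v` then it is invertible; and, when `Mv = 0`, it is invertible if and
only if the orthogonal complement of `v` intersects the kernel of `M` trivially. -/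
theorem borderedMatrix_invertible
    {n : ℕ} (M : Matrix (Fin n) (Fin n) ℝ) (hM : M.IsSymm)
    (v : Fin n → ℝ) (hv : v ≠ 0) :
    (({z : Fin n → ℝ | M *ᵥ z = 0} = {z | ∃ c : ℝ, z = c • v}) →
      IsUnit (borderedMatrix M v)) ∧
    (M *ᵥ v = 0 →
      (IsUnit (borderedMatrix M v) ↔
        ∀ z : Fin n → ℝ, v ⬝ᵥ z = 0 → M *ᵥ z = 0 → z = 0)) := by
  have hvv : v ⬝ᵥ v ≠ 0 := fun h => hv (dotProduct_self_eq_zero.mp h)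
  constructor
  · intro hker
    have hMv : M *ᵥ v = 0 := by
      have : v ∈ {z : Fin n → ℝ | M *ᵥ z = 0} := by
        rw [hker]; exact ⟨1, by simp⟩
      exact this
    apply borderedMatrix_key M hM v hv hMv
    intro z hvz hMz
    have : z ∈ {z : Fin n → ℝ | ∃ c : ℝ, z = c • v} := by rw [← hker]; exact hMz
    obtain ⟨c, rfl⟩ := this
    have : c * (v ⬝ᵥ v) = 0 := by simpa [dotProduct_smul, smul_eq_mul] using hvz
    have hc : c = 0 := (mul_eq_zero.mp this).resolve_right hvv
    rw [hc, zero_smul]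
  · intro hMv
    constructor
    · intro hunit z hvz hMz
      have hinj := Matrix.mulVec_injective_iff_isUnit.mpr hunit
      set w : Fin n ⊕ Unit → ℝ := Sum.elim z (fun _ => 0) with hw
      have hBw : borderedMatrix M v *ᵥ w = borderedMatrix M v *ᵥ 0 := by
        funext k
        cases k with
        | inl i =>
          rw [borderedMatrix_mulVec_inl, borderedMatrix_mulVec_inl]
          have h1 : w ∘ Sum.inl = z := rfl
          have h2 : (0 : Fin n ⊕ Unit → ℝ) ∘ Sum.inl = 0 := rfl
          rw [h1, h2, hMz]
          simp [hw]
        | inr u =>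
          cases u
          rw [borderedMatrix_mulVec_inr, borderedMatrix_mulVec_inr]
          have h1 : w ∘ Sum.inl = z := rfl
          have h2 : (0 : Fin n ⊕ Unit → ℝ) ∘ Sum.inl = 0 := rfl
          rw [h1, h2, hvz]
          simp
      have := hinj hBw
      funext i
      exact congrFun this (Sum.inl i)
    · exact borderedMatrix_key M hM v hv hMv
end
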